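/- Let n ≥ 4 be an integer, μ ∈ ℝ, f ∈ C¹([0,1]), and let u ∈ C²([0,1]) be positive on [0,1) and satisfy −u''(t) − ((n−1)/t) u'(t) = f(t) u(t)^{(n+2)/(n-2)} + μ u(t) for t ∈ (0,1), with u'(0) = 0 and u(1) = 0. Then for every ψ ∈ C³([0,1]) with ψ(0) = 0 the following Pohozaev-type identity holds: −(1/2)|u'(1)|² ψ(1) + ∫₀¹ u(t)² [ μ ψ'(t) + (1/4)ψ'''(t) + ((n−1)(n−3)/(4t³)) ( ψ(t) − t ψ'(t) ) ] t^{n-1} dt = ∫₀¹ u(t)^{2n/(n-2)} [ −((n−2)/(2n)) t f'(t) ψ(t) + ((n−1)/n) f(t) ( ψ(t) − t ψ'(t) ) ] t^{n-2} dt. -/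

import Mathlib

set_option maxHeartbeats 2000000


open Set intervalIntegral MeasureTheory

/-- Let `n ≥ 4`, `μ ∈ ℝ`, `f ∈ C¹([0,1])` and let `u ∈ C²([0,1])` be positive
on `[0,1)` and solve `−u'' − ((n−1)/t)u' = f(t)u^{(n+2)/(n-2)} + μu` on `(0,1)` with
`u'(0) = 0`, `u(1) = 0`. Then for every `ψ ∈ C³([0,1])` with `ψ(0) = 0` the Pohozaev-type
identity holds:
`−(1/2)|u'(1)|²ψ(1) + ∫₀¹ u²[μψ' + (1/4)ψ''' + ((n−1)(n−3)/(4t³))(ψ − tψ')] t^{n-1} dt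
  = ∫₀¹ u^{2n/(n-2)} [−((n−2)/(2n)) t f' ψ + ((n−1)/n) f (ψ − tψ')] t^{n-2} dt`. -/
theorem stmt_9 (n : ℕ) (hn : 4 ≤ n) (μ : ℝ)
    (f f' : ℝ → ℝ)
    (hf : ∀ t ∈ Icc (0 : ℝ) 1, HasDerivWithinAt f (f' t) (Icc (0 : ℝ) 1) t)
    (hf' : ContinuousOn f' (Icc (0 : ℝ) 1))
    (u u' u'' : ℝ → ℝ)
    (hu : ∀ t ∈ Icc (0 : ℝ) 1, HasDerivWithinAt u (u' t) (Icc (0 : ℝ) 1) t)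
    (hu' : ∀ t ∈ Icc (0 : ℝ) 1, HasDerivWithinAt u' (u'' t) (Icc (0 : ℝ) 1) t)
    (hu'' : ContinuousOn u'' (Icc (0 : ℝ) 1))
    (hupos : ∀ t ∈ Ico (0 : ℝ) 1, 0 < u t)
    (hode : ∀ t ∈ Ioo (0 : ℝ) 1,
      -u'' t - ((n : ℝ) - 1) / t * u' t =
        f t * u t ^ (((n : ℝ) + 2) / ((n : ℝ) - 2)) + μ * u t)
    (hu'0 : u' 0 = 0) (hu1 : u 1 = 0)
    (ψ ψ' ψ'' ψ''' : ℝ → ℝ)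
    (hψ : ∀ t ∈ Icc (0 : ℝ) 1, HasDerivWithinAt ψ (ψ' t) (Icc (0 : ℝ) 1) t)
    (hψ' : ∀ t ∈ Icc (0 : ℝ) 1, HasDerivWithinAt ψ' (ψ'' t) (Icc (0 : ℝ) 1) t)
    (hψ'' : ∀ t ∈ Icc (0 : ℝ) 1, HasDerivWithinAt ψ'' (ψ''' t) (Icc (0 : ℝ) 1) t)
    (hψ''' : ContinuousOn ψ''' (Icc (0 : ℝ) 1))
    (hψ0 : ψ 0 = 0) :
    -(1 / 2) * (u' 1) ^ 2 * ψ 1 +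
        (∫ t in (0 : ℝ)..1,
          (u t) ^ 2 *
            (μ * ψ' t + (1 / 4) * ψ''' t +
              ((n : ℝ) - 1) * ((n : ℝ) - 3) / (4 * t ^ 3) * (ψ t - t * ψ' t)) * t ^ (n - 1)) =
      ∫ t in (0 : ℝ)..1,
        u t ^ (2 * (n : ℝ) / ((n : ℝ) - 2)) *
          (-(((n : ℝ) - 2) / (2 * (n : ℝ))) * t * f' t * ψ t +
            ((n : ℝ) - 1) / (n : ℝ) * f t * (ψ t - t * ψ' t)) * t ^ (n - 2) := by
  obtain ⟨k, rfl⟩ : ∃ k, n = k + 4 := ⟨n - 4, by omega⟩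
  simp only [show k + 4 - 1 = k + 3 from rfl, show k + 4 - 2 = k + 2 from rfl]
  -- basic facts
  have hcast : ((k + 4 : ℕ) : ℝ) = (k : ℝ) + 4 := by push_cast; ring
  have hk0 : (0:ℝ) ≤ (k:ℝ) := Nat.cast_nonneg k
  have hden : ((k + 4 : ℕ) : ℝ) - 2 ≠ 0 := by rw [hcast]; linarith
  have hNne : ((k + 4 : ℕ) : ℝ) ≠ 0 := by rw [hcast]; linarith
  set qE : ℝ := 2 * ((k + 4 : ℕ) : ℝ) / (((k + 4 : ℕ) : ℝ) - 2) with hqE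
  set pE : ℝ := (((k + 4 : ℕ) : ℝ) + 2) / (((k + 4 : ℕ) : ℝ) - 2) with hpE
  have hqpos : 0 < qE := by
    rw [hqE, hcast]
    apply div_pos <;> linarith
  have hd2 : (k:ℝ) + 4 - 2 ≠ 0 := by linarith
  have hq1 : qE - 1 = pE := by rw [hqE, hpE, hcast]; field_simp; ring
  have hpq : pE + 1 = qE := by rw [hqE, hpE, hcast]; field_simp; ring
  -- continuity of everything
  have hcu : ContinuousOn u (Icc (0:ℝ) 1) := fun t ht => (hu t ht).continuousWithinAt
  have hcu' : ContinuousOn u' (Icc (0:ℝ) 1) := fun t ht => (hu' t ht).continuousWithinAt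
  have hcf : ContinuousOn f (Icc (0:ℝ) 1) := fun t ht => (hf t ht).continuousWithinAt
  have hcψ : ContinuousOn ψ (Icc (0:ℝ) 1) := fun t ht => (hψ t ht).continuousWithinAt
  have hcψ' : ContinuousOn ψ' (Icc (0:ℝ) 1) := fun t ht => (hψ' t ht).continuousWithinAt
  have hcψ'' : ContinuousOn ψ'' (Icc (0:ℝ) 1) := fun t ht => (hψ'' t ht).continuousWithinAt
  have hcq : ContinuousOn (fun t => u t ^ qE) (Icc (0:ℝ) 1) :=
    hcu.rpow_const (fun x _ => Or.inr hqpos.le)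
  -- the energy function
  set H : ℝ → ℝ := fun t =>
      (1/2) * (ψ t * (u' t * u' t) * t ^ (k+3))
      - (1/2) * (ψ' t * (u t * u' t) * t ^ (k+3))
      + ((k:ℝ) + 3) / 2 * (ψ t * (u t * u' t) * t ^ (k+2))
      + (1/4) * (ψ'' t * (u t * u t) * t ^ (k+3))
      - ((k:ℝ) + 3) / 4 * (ψ' t * (u t * u t) * t ^ (k+2))
      + ((k:ℝ) + 3) / 4 * (ψ t * (u t * u t) * t ^ (k+1))
      + ((k:ℝ) + 2) / (2 * ((k:ℝ) + 4)) * (ψ t * f t * u t ^ qE * t ^ (k+3))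
      + μ / 2 * (ψ t * (u t * u t) * t ^ (k+3)) with hHdef
  -- continuous versions of the two integrands
  set DL : ℝ → ℝ := fun t =>
      (u t) ^ 2 * (μ * ψ' t + (1/4) * ψ''' t) * t ^ (k+3)
      + ((k:ℝ) + 3) * ((k:ℝ) + 1) / 4 * ((u t) ^ 2 * (ψ t - t * ψ' t)) * t ^ k with hDLdef
  set DR : ℝ → ℝ := fun t =>
      u t ^ qE *
        (-((((k+4:ℕ):ℝ) - 2) / (2 * ((k+4:ℕ):ℝ))) * t * f' t * ψ t +
          (((k+4:ℕ):ℝ) - 1) / ((k+4:ℕ):ℝ) * f t * (ψ t - t * ψ' t)) * t ^ (k+2) with hDRdef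
  -- continuity of H, DL, DR on [0,1]
  have hpow : ∀ m : ℕ, ContinuousOn (fun t : ℝ => t ^ m) (Icc (0:ℝ) 1) :=
    fun m => (continuous_pow m).continuousOn
  have hHc : ContinuousOn H (Icc (0:ℝ) 1) := by
    rw [hHdef]
    exact (((((((continuousOn_const.mul ((hcψ.mul (hcu'.mul hcu')).mul (hpow _))).sub
      (continuousOn_const.mul ((hcψ'.mul (hcu.mul hcu')).mul (hpow _)))).add
      (continuousOn_const.mul ((hcψ.mul (hcu.mul hcu')).mul (hpow _)))).add
      (continuousOn_const.mul ((hcψ''.mul (hcu.mul hcu)).mul (hpow _)))).sub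
      (continuousOn_const.mul ((hcψ'.mul (hcu.mul hcu)).mul (hpow _)))).add
      (continuousOn_const.mul ((hcψ.mul (hcu.mul hcu)).mul (hpow _)))).add
      (continuousOn_const.mul (((hcψ.mul hcf).mul hcq).mul (hpow _)))).add
      (continuousOn_const.mul ((hcψ.mul (hcu.mul hcu)).mul (hpow _)))
  have hDLc : ContinuousOn DL (Icc (0:ℝ) 1) := by
    rw [hDLdef]
    exact (((hcu.pow 2).mul ((continuousOn_const.mul hcψ').add
        (continuousOn_const.mul hψ'''))).mul (hpow _)).add
      ((continuousOn_const.mul ((hcu.pow 2).mul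
        (hcψ.sub (continuousOn_id.mul hcψ')))).mul (hpow _))
  have hDRc : ContinuousOn DR (Icc (0:ℝ) 1) := by
    rw [hDRdef]
    exact ((hcq.mul ((((continuousOn_const.mul continuousOn_id).mul hf').mul hcψ).add
      ((continuousOn_const.mul hcf).mul (hcψ.sub (continuousOn_id.mul hcψ'))))).mul (hpow _))
  have huIcc : uIcc (0:ℝ) 1 = Icc (0:ℝ) 1 := uIcc_of_le zero_le_one
  have hIL : IntervalIntegrable DL volume 0 1 :=
    (hDLc.mono (by rw [huIcc])).intervalIntegrable
  have hIR : IntervalIntegrable DR volume 0 1 :=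
    (hDRc.mono (by rw [huIcc])).intervalIntegrable
  have h4 : (k:ℝ) + 4 ≠ 0 := by linarith
  have hFTC : (∫ t in (0:ℝ)..1, (DL t - DR t)) = H 1 - H 0 := by
    apply integral_eq_sub_of_hasDeriv_right_of_le zero_le_one hHc _ (hIL.sub hIR)
    intro x hx
    have hx0 : 0 < x := hx.1
    have hx1 : x < 1 := hx.2
    have hxm : x ∈ Icc (0:ℝ) 1 := ⟨hx0.le, hx1.le⟩
    have hnx : Icc (0:ℝ) 1 ∈ nhds x := Icc_mem_nhds hx0 hx1
    have hU : HasDerivAt u (u' x) x := (hu x hxm).hasDerivAt hnx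
    have hU' : HasDerivAt u' (u'' x) x := (hu' x hxm).hasDerivAt hnx
    have hF : HasDerivAt f (f' x) x := (hf x hxm).hasDerivAt hnx
    have hP1 : HasDerivAt ψ (ψ' x) x := (hψ x hxm).hasDerivAt hnx
    have hP2 : HasDerivAt ψ' (ψ'' x) x := (hψ' x hxm).hasDerivAt hnx
    have hP3 : HasDerivAt ψ'' (ψ''' x) x := (hψ'' x hxm).hasDerivAt hnx
    have hupx : 0 < u x := hupos x ⟨hx0.le, hx1⟩
    have hQ : HasDerivAt (fun t => u t ^ qE) (u' x * qE * u x ^ (qE - 1)) x :=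
      hU.rpow_const (Or.inl hupx.ne')
    rw [hq1] at hQ
    have hode' : u'' x = -((((k+4:ℕ):ℝ) - 1) / x * u' x) - f x * u x ^ pE - μ * u x := by
      have := hode x hx
      linarith
    have hrel : u x ^ pE * u x = u x ^ qE := by
      rw [← hpq, Real.rpow_add_one hupx.ne']
    have T1 := ((hP1.mul (hU'.mul hU')).mul (hasDerivAt_pow (k+3) x)).const_mul ((1:ℝ)/2)
    have T2 := ((hP2.mul (hU.mul hU')).mul (hasDerivAt_pow (k+3) x)).const_mul ((1:ℝ)/2)
    have T3 := ((hP1.mul (hU.mul hU')).mul (hasDerivAt_pow (k+2) x)).const_mul (((k:ℝ)+3)/2)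
    have T4 := ((hP3.mul (hU.mul hU)).mul (hasDerivAt_pow (k+3) x)).const_mul ((1:ℝ)/4)
    have T5 := ((hP2.mul (hU.mul hU)).mul (hasDerivAt_pow (k+2) x)).const_mul (((k:ℝ)+3)/4)
    have T6 := ((hP1.mul (hU.mul hU)).mul (hasDerivAt_pow (k+1) x)).const_mul (((k:ℝ)+3)/4)
    have T7 := (((hP1.mul hF).mul hQ).mul (hasDerivAt_pow (k+3) x)).const_mul
        (((k:ℝ)+2)/(2*((k:ℝ)+4)))
    have T8 := ((hP1.mul (hU.mul hU)).mul (hasDerivAt_pow (k+3) x)).const_mul (μ/2)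
    have big := ((((((T1.sub T2).add T3).add T4).sub T5).add T6).add T7).add T8
    rw [hHdef]
    show HasDerivWithinAt _ (DL x - DR x) (Ioi x) x
    convert big.hasDerivWithinAt using 1
    case e'_4 => rfl
    case e'_5 => rfl
    case e'_8 => rfl
    simp only [hDLdef, hDRdef, Pi.mul_apply]
    rw [hode', ← hrel, hqE, hcast]
    simp only [show k+3-1 = k+2 from rfl, show k+2-1 = k+1 from rfl, show k+1-1 = k from rfl]
    push_cast
    field_simp
    ring
  have hH1 : H 1 = 1/2 * (u' 1)^2 * ψ 1 := by
    simp only [hHdef]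
    rw [hu1, Real.zero_rpow hqpos.ne']
    ring
  have hH0 : H 0 = 0 := by
    simp only [hHdef]
    simp [pow_succ]
  have hsplit : (∫ t in (0:ℝ)..1, (DL t - DR t)) =
      (∫ t in (0:ℝ)..1, DL t) - ∫ t in (0:ℝ)..1, DR t := integral_sub hIL hIR
  have hLeq : (∫ t in (0:ℝ)..1,
      (u t) ^ 2 * (μ * ψ' t + (1 / 4) * ψ''' t +
        (((k+4:ℕ):ℝ) - 1) * (((k+4:ℕ):ℝ) - 3) / (4 * t ^ 3) * (ψ t - t * ψ' t)) * t ^ (k+3)) =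
      ∫ t in (0:ℝ)..1, DL t := by
    apply intervalIntegral.integral_congr_ae
    filter_upwards with x hx
    rw [uIoc_of_le zero_le_one] at hx
    have hx0 : x ≠ 0 := ne_of_gt hx.1
    simp only [hDLdef]
    rw [hcast]
    push_cast
    field_simp
    ring
  rw [hLeq, show intervalIntegral DR 0 1 volume = ∫ t in (0:ℝ)..1, DR t from rfl]
  rw [hsplit, hH1, hH0] at hFTC
  linarith [hFTC]
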